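/- With Q, S and A_n as in the context, the ψ-Appell polynomials satisfy the ψ-difference equation Q(A_n) = n_ψ·X^{n−1} for all n ≥ 1, and Q(A_0) = 0. -/
import Mathlib


open Polynomial Finset

/-- With `Q`, `S` and `A n` as in the context, the ψ-Appell
polynomials satisfy the ψ-difference equation `Q (A n) = n_ψ • X^(n-1)` for all
`n ≥ 1`, and `Q (A 0) = 0`. -/
theorem stmt4 {K : Type*} [Field K] [CharZero K]
    (ψ : ℕ → K) (hψ : ∀ n, ψ n ≠ 0)
    (nψ : ℕ → K) (hnψ0 : nψ 0 = 0)
    (hnψ : ∀ n : ℕ, 1 ≤ n → nψ n = ψ (n - 1) / ψ n)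
    (hadm : ∀ n : ℕ, 1 ≤ n → nψ n ≠ 0)
    (nψfact : ℕ → K) (hfact0 : nψfact 0 = 1)
    (hfact : ∀ n : ℕ, nψfact (n + 1) = nψ (n + 1) * nψfact n)
    (D : Polynomial K →ₗ[K] Polynomial K)
    (hD : ∀ n : ℕ, D (X ^ (n + 1)) = nψ (n + 1) • X ^ n)
    (hD1 : D 1 = 0)
    (q : ℕ → K) (hq1 : q 1 ≠ 0)
    (Q : Polynomial K →ₗ[K] Polynomial K)
    (hQ : ∀ p : Polynomial K,
      Q p = ∑ k ∈ Finset.range (p.natDegree + 1),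
        (q (k + 1) / nψfact (k + 1)) • ((D ^ (k + 1)) p))
    (S : Polynomial K →ₗ[K] Polynomial K)
    (hS : ∀ p : Polynomial K,
      S p = ∑ k ∈ Finset.range (p.natDegree + 1),
        (q (k + 1) / nψfact (k + 1)) • ((D ^ k) p))
    (Sinv : Polynomial K →ₗ[K] Polynomial K)
    (hSinv₁ : ∀ p : Polynomial K, Sinv (S p) = p)
    (hSinv₂ : ∀ p : Polynomial K, S (Sinv p) = p)
    (A : ℕ → Polynomial K)
    (hA : ∀ n : ℕ, A n = Sinv (X ^ n)) :
    (∀ n : ℕ, 1 ≤ n → Q (A n) = nψ n • X ^ (n - 1)) ∧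
    Q (A 0) = 0 := by
  have key : ∀ p : Polynomial K, Q p = D (S p) := by
    intro p
    rw [hQ, hS, map_sum]
    refine Finset.sum_congr rfl fun k _ => ?_
    rw [map_smul, pow_succ', Module.End.mul_apply]
  constructor
  · intro n hn
    rw [hA, key, hSinv₂]
    obtain ⟨m, rfl⟩ := Nat.exists_eq_add_of_le hn
    simpa [Nat.add_comm] using hD m
  · rw [hA, key, hSinv₂, pow_zero, hD1]
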